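/- Let x, y ∈ S with x_1 · y_1 ≤ 0, where x_1 = ⟨x, e_1⟩ and y_1 = ⟨y, e_1⟩ are the first coordinates. Then there exists t ∈ [0,1] such that t²·exp(⟨x, A x⟩) + 2t(1−t)·exp(⟨x, A y⟩) + (1−t)²·exp(⟨y, A y⟩) ≤ max{e^{λ_2}, cosh λ_1}. -/

import Mathlib

open MeasureTheory Real Filter Topology

noncomputable section

/-- The unit sphere `S = 𝕊^{d-1}` in `ℝ^d`. -/
abbrev Sph (d : ℕ) : Type := Metric.sphere (0 : EuclideanSpace ℝ (Fin d)) 1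

variable {d : ℕ}

/-- The bilinear form `⟨x, A y⟩` for the diagonal matrix `A = diag lam`. -/
def qA (lam : Fin d → ℝ) (x y : EuclideanSpace ℝ (Fin d)) : ℝ :=
  ∑ i, lam i * x i * y i

/-- The interaction kernel `K_A(x,y) = exp ⟨x, A y⟩`. -/
def Kker (lam : Fin d → ℝ) (x y : Sph d) : ℝ :=
  Real.exp (qA lam (x : EuclideanSpace ℝ (Fin d)) (y : EuclideanSpace ℝ (Fin d)))

/-- The interaction energy `I_A(μ)`. -/
def IA (lam : Fin d → ℝ) (μ : Measure (Sph d)) : ℝ :=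
  ∫ x, ∫ y, Kker lam x y ∂μ ∂μ

/-- The potential `W_μ(x) = ∫ K_A(x,y) dμ(y)`. -/
def WA (lam : Fin d → ℝ) (μ : Measure (Sph d)) (x : Sph d) : ℝ :=
  ∫ y, Kker lam x y ∂μ

open scoped Classical in
/-- Relative entropy of `μ` with respect to `ω`, with value `+∞` when `μ` is not
absolutely continuous w.r.t. `ω` or the entropy integral diverges. -/
def Ent (ω μ : Measure (Sph d)) : EReal :=
  if μ ≪ ω ∧ Integrable (fun x => Real.log (μ.rnDeriv ω x).toReal) μ
  then ((∫ x, Real.log (μ.rnDeriv ω x).toReal ∂μ : ℝ) : EReal)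
  else ⊤

/-- The free energy `E_{ε,A}(μ) = ε·Ent(μ) − (1/2)·I_A(μ)`. -/
def EA (lam : Fin d → ℝ) (ω : Measure (Sph d)) (ε : ℝ) (μ : Measure (Sph d)) : EReal :=
  (ε : EReal) * Ent ω μ - ((IA lam μ / 2 : ℝ) : EReal)

/-- The antipodal map on the sphere. -/
def antip (x : Sph d) : Sph d :=
  ⟨-(x : EuclideanSpace ℝ (Fin d)), by
    have hx := x.2
    rw [mem_sphere_zero_iff_norm] at hx ⊢
    rwa [norm_neg]⟩

/-- The sphere self-map induced by a linear isometry equivalence of `ℝ^d`. -/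
def sphMap (g : EuclideanSpace ℝ (Fin d) ≃ₗᵢ[ℝ] EuclideanSpace ℝ (Fin d)) (x : Sph d) : Sph d :=
  ⟨g (x : EuclideanSpace ℝ (Fin d)), by
    have hx := x.2
    rw [mem_sphere_zero_iff_norm] at hx ⊢
    rwa [g.norm_map]⟩

/-- `ω` is the uniform probability measure on the sphere, characterised as a
rotation-invariant Borel probability measure. -/
def IsUniform (ω : Measure (Sph d)) : Prop :=
  IsProbabilityMeasure ω ∧
  ∀ g : EuclideanSpace ℝ (Fin d) ≃ₗᵢ[ℝ] EuclideanSpace ℝ (Fin d),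
    Measure.map (sphMap g) ω = ω

/-- The (topological) support of a measure. -/
def msupport (μ : Measure (Sph d)) : Set (Sph d) :=
  {x | ∀ U : Set (Sph d), IsOpen U → x ∈ U → 0 < μ U}

/-- The set of global maximizers of the potential `W_ν`. -/
def argmaxW (lam : Fin d → ℝ) (ν : Measure (Sph d)) : Set (Sph d) :=
  {x | ∀ y, WA lam ν y ≤ WA lam ν x}

/-- `μ` is a Gibbs critical point of `E_{ε,A}`. -/
def IsGibbs (lam : Fin d → ℝ) (ω : Measure (Sph d)) (ε : ℝ) (μ : Measure (Sph d)) : Prop :=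
  IsProbabilityMeasure μ ∧
  μ = ω.withDensity (fun x => ENNReal.ofReal
    (Real.exp (WA lam μ x / ε) / ∫ z, Real.exp (WA lam μ z / ε) ∂ω))

/-- `μ` is a global minimizer of `E_{ε,A}` over Borel probability measures. -/
def IsMinimizer (lam : Fin d → ℝ) (ω : Measure (Sph d)) (ε : ℝ) (μ : Measure (Sph d)) : Prop :=
  IsProbabilityMeasure μ ∧
  ∀ ν : Measure (Sph d), IsProbabilityMeasure ν → EA lam ω ε μ ≤ EA lam ω ε ν

/-- `m_ε`, the infimum of the free energy over probability measures. -/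
def mEps (lam : Fin d → ℝ) (ω : Measure (Sph d)) (ε : ℝ) : EReal :=
  sInf {r : EReal | ∃ μ : Measure (Sph d), IsProbabilityMeasure μ ∧ EA lam ω ε μ = r}

lemma sphere_sum_sq {d : ℕ} (z : Sph d) :
    ∑ i, ((z : EuclideanSpace ℝ (Fin d)) i) ^ 2 = 1 := by
  have hz : ‖(z : EuclideanSpace ℝ (Fin d))‖ = 1 := by
    have := z.2; rwa [mem_sphere_zero_iff_norm] at this
  have h := EuclideanSpace.norm_eq (z : EuclideanSpace ℝ (Fin d))
  rw [hz] at h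
  have hnn : 0 ≤ ∑ i, ‖(z : EuclideanSpace ℝ (Fin d)) i‖ ^ 2 :=
    Finset.sum_nonneg fun i _ => sq_nonneg _
  have h2 : ∑ i, ‖(z : EuclideanSpace ℝ (Fin d)) i‖ ^ 2 = 1 := by
    nlinarith [Real.sq_sqrt hnn]
  simpa [Real.norm_eq_abs, sq_abs] using h2

lemma exp_convex_comb (w z α : ℝ) (h0 : 0 ≤ α) (h1 : α ≤ 1) :
    Real.exp ((1 - α) * w + α * z) ≤ (1 - α) * Real.exp w + α * Real.exp z := by
  have := convexOn_exp.2 (Set.mem_univ w) (Set.mem_univ z)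
    (by linarith : (0:ℝ) ≤ 1 - α) h0 (by ring)
  simpa [smul_eq_mul] using this

lemma two_point_aux (a b c M L u2 v2 r : ℝ)
    (hr0 : 0 ≤ r) (hrsq : r ^ 2 = u2 * v2) (hML : M ≤ L)
    (ha2 : a - M ≤ u2 * (L - M)) (hc2 : c - M ≤ v2 * (L - M))
    (hb2 : r * (L - M) ≤ M - b) :
    ∃ t ∈ Set.Icc (0 : ℝ) 1,
      t ^ 2 * a + 2 * t * (1 - t) * b + (1 - t) ^ 2 * c ≤ M := by
  by_cases hAM : a ≤ M
  · exact ⟨1, ⟨by norm_num, le_refl 1⟩, by linarith⟩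
  · by_cases hCM : c ≤ M
    · exact ⟨0, ⟨le_refl 0, by norm_num⟩, by linarith⟩
    · push_neg at hAM hCM
      have hbM : b ≤ M := by
        have := mul_nonneg hr0 (sub_nonneg.2 hML); linarith
      have hD : 0 < a + c - 2 * b := by linarith
      have hkey : (a - M) * (c - M) ≤ (M - b) ^ 2 := by
        have h1 : (a - M) * (c - M) ≤ (u2 * (L - M)) * (v2 * (L - M)) :=
          mul_le_mul ha2 hc2 (by linarith) (le_trans (by linarith) ha2)
        have h2 : (u2 * (L - M)) * (v2 * (L - M)) = (r * (L - M)) ^ 2 := by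
          rw [mul_pow, hrsq]; ring
        have h3 : (r * (L - M)) ^ 2 ≤ (M - b) ^ 2 :=
          pow_le_pow_left₀ (mul_nonneg hr0 (by linarith)) hb2 2
        linarith
      refine ⟨(c - b) / (a + c - 2 * b), ⟨div_nonneg (by linarith) hD.le, ?_⟩, ?_⟩
      · rw [div_le_one hD]; linarith
      · have hexpr : ((c - b) / (a + c - 2 * b)) ^ 2 * a +
            2 * ((c - b) / (a + c - 2 * b)) * (1 - (c - b) / (a + c - 2 * b)) * b +
            (1 - (c - b) / (a + c - 2 * b)) ^ 2 * c =
            (a * c - b ^ 2) / (a + c - 2 * b) := by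
          have ht : (c - b) / (a + c - 2 * b) * (a + c - 2 * b) = c - b :=
            div_mul_cancel₀ _ hD.ne'
          rw [eq_div_iff hD.ne']
          linear_combination ((c - b) / (a + c - 2 * b) * (a + c - 2 * b) - (c - b)) * ht
        rw [hexpr, div_le_iff₀ hD]
        nlinarith [hkey]

set_option maxHeartbeats 1600000 in
/-- two-point bound across the equator. -/
theorem stmt6 (d : ℕ) (hd : 2 ≤ d) (lam : Fin d → ℝ)
    (hanti : Antitone lam)
    (hgap : lam ⟨1, by omega⟩ < lam ⟨0, by omega⟩)
    (hpos : ∀ i, 0 < lam i)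
    (x y : Sph d)
    (hxy : (x : EuclideanSpace ℝ (Fin d)) ⟨0, by omega⟩ *
        (y : EuclideanSpace ℝ (Fin d)) ⟨0, by omega⟩ ≤ 0) :
    ∃ t ∈ Set.Icc (0 : ℝ) 1,
      t ^ 2 * Real.exp (qA lam (x : EuclideanSpace ℝ (Fin d)) (x : EuclideanSpace ℝ (Fin d))) +
          2 * t * (1 - t) *
            Real.exp (qA lam (x : EuclideanSpace ℝ (Fin d)) (y : EuclideanSpace ℝ (Fin d))) +
          (1 - t) ^ 2 *
            Real.exp (qA lam (y : EuclideanSpace ℝ (Fin d)) (y : EuclideanSpace ℝ (Fin d))) ≤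
        max (Real.exp (lam ⟨1, by omega⟩)) (Real.cosh (lam ⟨0, by omega⟩)) := by
  have h0d : 0 < d := by omega
  have h1d : 1 < d := by omega
  set i0 : Fin d := ⟨0, h0d⟩ with hi0
  set i1 : Fin d := ⟨1, h1d⟩ with hi1
  set X : Fin d → ℝ := fun i => (x : EuclideanSpace ℝ (Fin d)) i with hX
  set Y : Fin d → ℝ := fun i => (y : EuclideanSpace ℝ (Fin d)) i with hY
  have hsumX : ∑ i, X i ^ 2 = 1 := sphere_sum_sq x
  have hsumY : ∑ i, Y i ^ 2 = 1 := sphere_sum_sq y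
  set u : ℝ := X i0 with hu
  set v : ℝ := Y i0 with hv
  have hxy' : u * v ≤ 0 := hxy
  set E : ℝ := Real.exp (lam i1) with hE
  set L : ℝ := Real.exp (lam i0) with hL
  -- index facts
  have hlam_le : ∀ i : Fin d, i ≠ i0 → lam i ≤ lam i1 := by
    intro i hi
    apply hanti
    have hv0 : (i : ℕ) ≠ 0 := by
      intro h; exact hi (Fin.ext h)
    rw [Fin.le_def]
    show (1:ℕ) ≤ (i : ℕ); omega
  have hsplit : ∀ (f : Fin d → ℝ),
      ∑ i, f i = f i0 + ∑ i ∈ Finset.univ.erase i0, f i := by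
    intro f
    exact (Finset.add_sum_erase Finset.univ f (Finset.mem_univ i0)).symm
  have heraseX : ∑ i ∈ Finset.univ.erase i0, X i ^ 2 = 1 - u ^ 2 := by
    have := hsplit (fun i => X i ^ 2); rw [hsumX] at this; linarith
  have heraseY : ∑ i ∈ Finset.univ.erase i0, Y i ^ 2 = 1 - v ^ 2 := by
    have := hsplit (fun i => Y i ^ 2); rw [hsumY] at this; linarith
  have hu2 : u ^ 2 ≤ 1 := by
    have := Finset.single_le_sum (f := fun i => X i ^ 2)
      (fun i _ => sq_nonneg _) (Finset.mem_univ i0)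
    rw [hsumX] at this; exact this
  have hv2 : v ^ 2 ≤ 1 := by
    have := Finset.single_le_sum (f := fun i => Y i ^ 2)
      (fun i _ => sq_nonneg _) (Finset.mem_univ i0)
    rw [hsumY] at this; exact this
  -- diagonal bounds
  have hdiag : ∀ (Z : Fin d → ℝ),
      (∑ i ∈ Finset.univ.erase i0, Z i ^ 2 = 1 - (Z i0) ^ 2) →
      ∑ i, lam i * Z i * Z i ≤ (1 - (Z i0) ^ 2) * lam i1 + (Z i0) ^ 2 * lam i0 := by
    intro Z herase
    rw [hsplit (fun i => lam i * Z i * Z i)]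
    have hbd : ∑ i ∈ Finset.univ.erase i0, lam i * Z i * Z i ≤
        ∑ i ∈ Finset.univ.erase i0, lam i1 * Z i ^ 2 := by
      apply Finset.sum_le_sum
      intro i hi
      have h1 : lam i ≤ lam i1 := hlam_le i (Finset.ne_of_mem_erase hi)
      nlinarith [sq_nonneg (Z i)]
    rw [← Finset.mul_sum, herase] at hbd
    have heq : lam i0 * Z i0 * Z i0 = (Z i0) ^ 2 * lam i0 := by ring
    linarith [hbd, heq.le, heq.ge]
  have hqxx : qA lam (x : EuclideanSpace ℝ (Fin d)) (x : EuclideanSpace ℝ (Fin d)) ≤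
      (1 - u ^ 2) * lam i1 + u ^ 2 * lam i0 := hdiag X heraseX
  have hqyy : qA lam (y : EuclideanSpace ℝ (Fin d)) (y : EuclideanSpace ℝ (Fin d)) ≤
      (1 - v ^ 2) * lam i1 + v ^ 2 * lam i0 := hdiag Y heraseY
  -- cross bound
  set r : ℝ := |u| * |v| with hr
  have hr0 : 0 ≤ r := mul_nonneg (abs_nonneg _) (abs_nonneg _)
  have hr1 : r ≤ 1 := by
    have hua : |u| ≤ 1 := by nlinarith [sq_abs u, abs_nonneg u]
    have hva : |v| ≤ 1 := by nlinarith [sq_abs v, abs_nonneg v]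
    nlinarith [abs_nonneg u]
  have huv : u * v = -r := by
    have h := abs_of_nonpos hxy'
    rw [abs_mul] at h; rw [hr]; linarith
  have hqxy : qA lam (x : EuclideanSpace ℝ (Fin d)) (y : EuclideanSpace ℝ (Fin d)) ≤
      (1 - r) * lam i1 + r * (-(lam i0)) := by
    have hterm : ∀ i ∈ Finset.univ.erase i0, lam i * X i * Y i ≤
        lam i1 / 2 * X i ^ 2 + lam i1 / 2 * Y i ^ 2 := by
      intro i hi
      have h1 : lam i ≤ lam i1 := hlam_le i (Finset.ne_of_mem_erase hi)
      have h2 : 0 < lam i := hpos i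
      have h3 : lam i * (X i * Y i) ≤ lam i * ((X i ^ 2 + Y i ^ 2) / 2) := by
        apply mul_le_mul_of_nonneg_left _ h2.le
        nlinarith [sq_nonneg (X i - Y i)]
      have h4 : lam i * ((X i ^ 2 + Y i ^ 2) / 2) ≤
          lam i1 * ((X i ^ 2 + Y i ^ 2) / 2) :=
        mul_le_mul_of_nonneg_right h1 (by positivity)
      have h5 : lam i1 * ((X i ^ 2 + Y i ^ 2) / 2) =
          lam i1 / 2 * X i ^ 2 + lam i1 / 2 * Y i ^ 2 := by ring
      have h6 : lam i * X i * Y i = lam i * (X i * Y i) := by ring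
      linarith [h3, h4, h5.le, h6.le, h6.ge]
    have hstep : ∑ i ∈ Finset.univ.erase i0, lam i * X i * Y i ≤
        lam i1 / 2 * (1 - u ^ 2) + lam i1 / 2 * (1 - v ^ 2) := by
      calc ∑ i ∈ Finset.univ.erase i0, lam i * X i * Y i
          ≤ ∑ i ∈ Finset.univ.erase i0,
              (lam i1 / 2 * X i ^ 2 + lam i1 / 2 * Y i ^ 2) :=
            Finset.sum_le_sum hterm
        _ = lam i1 / 2 * (1 - u ^ 2) + lam i1 / 2 * (1 - v ^ 2) := by
            rw [Finset.sum_add_distrib, ← Finset.mul_sum, ← Finset.mul_sum,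
              heraseX, heraseY]
    have hq : qA lam (x : EuclideanSpace ℝ (Fin d)) (y : EuclideanSpace ℝ (Fin d)) =
        lam i0 * u * v + ∑ i ∈ Finset.univ.erase i0, lam i * X i * Y i :=
      hsplit (fun i => lam i * X i * Y i)
    have hr2 : 1 - (u ^ 2 + v ^ 2) / 2 ≤ 1 - r := by
      nlinarith [sq_nonneg (|u| - |v|), sq_abs u, sq_abs v]
    have hl1 : 0 < lam i1 := hpos i1
    have hmul : lam i1 * (1 - (u ^ 2 + v ^ 2) / 2) ≤ lam i1 * (1 - r) :=
      mul_le_mul_of_nonneg_left hr2 hl1.le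
    have huv' : lam i0 * u * v = -(lam i0 * r) := by
      rw [mul_assoc, huv]; ring
    rw [hq]
    linarith [hstep, hmul, huv'.le, huv'.ge]
  -- exponential bounds
  have haE : Real.exp (qA lam (x : EuclideanSpace ℝ (Fin d)) (x : EuclideanSpace ℝ (Fin d))) ≤
      (1 - u ^ 2) * E + u ^ 2 * L :=
    le_trans (Real.exp_le_exp.2 hqxx)
      (exp_convex_comb (lam i1) (lam i0) (u ^ 2) (sq_nonneg u) hu2)
  have hcE : Real.exp (qA lam (y : EuclideanSpace ℝ (Fin d)) (y : EuclideanSpace ℝ (Fin d))) ≤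
      (1 - v ^ 2) * E + v ^ 2 * L :=
    le_trans (Real.exp_le_exp.2 hqyy)
      (exp_convex_comb (lam i1) (lam i0) (v ^ 2) (sq_nonneg v) hv2)
  have hbE : Real.exp (qA lam (x : EuclideanSpace ℝ (Fin d)) (y : EuclideanSpace ℝ (Fin d))) ≤
      (1 - r) * E + r * Real.exp (-(lam i0)) :=
    le_trans (Real.exp_le_exp.2 hqxy)
      (exp_convex_comb (lam i1) (-(lam i0)) r hr0 hr1)
  -- comparisons with M
  have hcosh : Real.cosh (lam i0) = (L + Real.exp (-(lam i0))) / 2 := by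
    rw [Real.cosh_eq]
  have hE_le_M : E ≤ max E (Real.cosh (lam i0)) := le_max_left _ _
  have hcosh_le_M : Real.cosh (lam i0) ≤ max E (Real.cosh (lam i0)) := le_max_right _ _
  have hE_le_L : E ≤ L := Real.exp_le_exp.2 hgap.le
  have hcosh_le_L : Real.cosh (lam i0) ≤ L := by
    have : Real.exp (-(lam i0)) ≤ L := Real.exp_le_exp.2 (by linarith [hpos i0])
    rw [hcosh]; linarith
  have hM_le_L : max E (Real.cosh (lam i0)) ≤ L := max_le hE_le_L hcosh_le_L
  apply two_point_aux _ _ _ _ L (u ^ 2) (v ^ 2) r hr0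
    (by rw [hr, mul_pow, sq_abs, sq_abs]) hM_le_L
  · nlinarith [haE, mul_nonneg (by nlinarith : (0:ℝ) ≤ 1 - u ^ 2)
      (by linarith : (0:ℝ) ≤ max E (Real.cosh (lam i0)) - E)]
  · nlinarith [hcE, mul_nonneg (by nlinarith : (0:ℝ) ≤ 1 - v ^ 2)
      (by linarith : (0:ℝ) ≤ max E (Real.cosh (lam i0)) - E)]
  · nlinarith [hbE, hcosh,
      mul_nonneg (by linarith : (0:ℝ) ≤ 1 - r)
        (by linarith : (0:ℝ) ≤ max E (Real.cosh (lam i0)) - E),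
      mul_nonneg hr0 (by linarith : (0:ℝ) ≤
        2 * max E (Real.cosh (lam i0)) - 2 * Real.cosh (lam i0))]

end
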